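/- Under the forward setting, let c > 0 and define the clipped weighted mean σ̂² = Σ_{s=t}^{t+m} w_{s,t} · min( X_s², c / w_{s,t} ). Then | E[σ̂²] − σ_t² − δ_{0,t} | ≤ 2 Σ_{s=t}^{t+m} w_{s,t}² κ̃_s / c = 2 κ̃†_t / ( n†_eff · c ); in particular E[σ̂²] ≤ σ_t² + δ_{0,t} and E[σ̂²] ≥ σ_t² + δ_{0,t} − 2 κ̃†_t / ( n†_eff · c ). -/

import Mathlib

open MeasureTheory ProbabilityTheory Finset

/-- Bias bound for the clipped weighted mean proxy (proof of Theorem 4):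
`|E σ̂² − σₜ² − δ₀ₜ| ≤ 2 Σₛ w²ₛ κ̃ₛ / c = 2κ̃†ₜ/(n† c)`; in particular
`E σ̂² ≤ σₜ² + δ₀ₜ` and `E σ̂² ≥ σₜ² + δ₀ₜ − 2κ̃†ₜ/(n† c)`. -/
theorem clipped_weighted_mean_bias
    {Ω : Type*} [MeasurableSpace Ω] (μ : Measure Ω) [IsProbabilityMeasure μ]
    (X : ℤ → Ω → ℝ) (σ κ κt : ℤ → ℝ)
    (hXmeas : ∀ s, Measurable (X s))
    (hindep : iIndepFun X μ)
    (hmean : ∀ s, ∫ ω, X s ω ∂μ = 0)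
    (hvar : ∀ s, ∫ ω, (X s ω) ^ 2 ∂μ = (σ s) ^ 2)
    (hσpos : ∀ s, 0 < σ s)
    (hκ : ∀ s, ∫ ω, ((X s ω) ^ 2 - (σ s) ^ 2) ^ 2 ∂μ = κ s)
    (hκt : ∀ s, ∫ ω, (X s ω) ^ 4 ∂μ = κt s)
    (hX4int : ∀ s, Integrable (fun ω => (X s ω) ^ 4) μ)
    (t : ℤ) (m : ℕ) (lam : ℝ) (hlam : lam ∈ Set.Ioo (0 : ℝ) 1)
    (w : ℕ → ℝ) (hw : ∀ i, w i = lam ^ i / ∑ j ∈ Finset.range (m + 1), lam ^ j)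
    (neff κtdag δ0 : ℝ)
    (hneff : neff = 1 / ∑ i ∈ Finset.range (m + 1), (w i) ^ 2)
    (hκtdag : κtdag = (∑ i ∈ Finset.range (m + 1), (w i) ^ 2 * κt (t + i)) /
      ∑ i ∈ Finset.range (m + 1), (w i) ^ 2)
    (hδ0 : δ0 = (∑ i ∈ Finset.range (m + 1), w i * (σ (t + i)) ^ 2) - (σ t) ^ 2)
    (c : ℝ) (hc : 0 < c) :
    (2 * (∑ i ∈ Finset.range (m + 1), (w i) ^ 2 * κt (t + i)) / c = 2 * κtdag / (neff * c)) ∧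
    (|(∫ ω, ∑ i ∈ Finset.range (m + 1), w i * min ((X (t + i) ω) ^ 2) (c / w i) ∂μ)
        - (σ t) ^ 2 - δ0|
      ≤ 2 * (∑ i ∈ Finset.range (m + 1), (w i) ^ 2 * κt (t + i)) / c) ∧
    ((∫ ω, ∑ i ∈ Finset.range (m + 1), w i * min ((X (t + i) ω) ^ 2) (c / w i) ∂μ)
      ≤ (σ t) ^ 2 + δ0) ∧
    ((σ t) ^ 2 + δ0 - 2 * κtdag / (neff * c)
      ≤ ∫ ω, ∑ i ∈ Finset.range (m + 1), w i * min ((X (t + i) ω) ^ 2) (c / w i) ∂μ) := by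
  obtain ⟨hlam0, hlam1⟩ := hlam
  have hSpos : 0 < ∑ j ∈ Finset.range (m + 1), lam ^ j :=
    Finset.sum_pos (fun j _ => pow_pos hlam0 j) ⟨0, Finset.mem_range.2 (Nat.succ_pos m)⟩
  have hwpos : ∀ i, 0 < w i := fun i => by
    rw [hw]; exact div_pos (pow_pos hlam0 i) hSpos
  have hWpos : 0 < ∑ i ∈ Finset.range (m + 1), (w i) ^ 2 :=
    Finset.sum_pos (fun i _ => pow_pos (hwpos i) 2) ⟨0, Finset.mem_range.2 (Nat.succ_pos m)⟩
  have hκtnn : ∀ s, 0 ≤ κt s := fun s => by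
    rw [← hκt s]; exact integral_nonneg fun ω => by positivity
  set S := ∑ i ∈ Finset.range (m + 1), (w i) ^ 2 * κt (t + i) with hSdef
  set T := ∑ i ∈ Finset.range (m + 1), w i * (σ (t + i)) ^ 2 with hTdef
  have hSnn : 0 ≤ S :=
    Finset.sum_nonneg fun i _ => mul_nonneg (by positivity) (hκtnn _)
  -- Part 1: the algebraic identity
  have hEq : 2 * S / c = 2 * κtdag / (neff * c) := by
    rw [hκtdag, hneff]
    field_simp
  -- integrability facts
  have hX2int : ∀ s, Integrable (fun ω => (X s ω) ^ 2) μ := by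
    intro s
    refine ((integrable_const (1 : ℝ)).add (hX4int s)).mono'
      ((hXmeas s).pow_const 2).aestronglyMeasurable (ae_of_all _ fun ω => ?_)
    simp only [Pi.add_apply, Real.norm_eq_abs]
    rw [abs_of_nonneg (by positivity : (0:ℝ) ≤ (X s ω) ^ 2)]
    nlinarith [sq_nonneg ((X s ω) ^ 2 - 1)]
  have hminint : ∀ i : ℕ, Integrable (fun ω => min ((X (t + i) ω) ^ 2) (c / w i)) μ := by
    intro i
    refine (integrable_const (c / w i)).mono'
      (((hXmeas (t + i)).pow_const 2).min measurable_const).aestronglyMeasurable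
      (ae_of_all _ fun ω => ?_)
    rw [Real.norm_eq_abs, abs_of_nonneg (le_min (by positivity) (le_of_lt (div_pos hc (hwpos i))))]
    exact min_le_right _ _
  -- per-index bounds
  have hub : ∀ i : ℕ, ∫ ω, min ((X (t + i) ω) ^ 2) (c / w i) ∂μ ≤ (σ (t + i)) ^ 2 := by
    intro i
    rw [← hvar (t + i)]
    exact integral_mono (hminint i) (hX2int (t + i)) fun ω => min_le_left _ _
  have hlb : ∀ i : ℕ, (σ (t + i)) ^ 2 - ∫ ω, min ((X (t + i) ω) ^ 2) (c / w i) ∂μ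
      ≤ κt (t + i) * w i / c := by
    intro i
    have ha : 0 < c / w i := div_pos hc (hwpos i)
    have key : ∀ ω, (X (t + i) ω) ^ 2 - min ((X (t + i) ω) ^ 2) (c / w i)
        ≤ (X (t + i) ω) ^ 4 * (w i / c) := by
      intro ω
      set x := X (t + i) ω
      rcases le_total (x ^ 2) (c / w i) with h | h
      · rw [min_eq_left h]
        have hwi := hwpos i
        simp only [sub_self]
        positivity
      · rw [min_eq_right h]
        have hx4 : x ^ 4 * (w i / c) = x ^ 4 / (c / w i) := by
          field_simp
        rw [hx4, le_div_iff₀ ha]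
        nlinarith [sq_nonneg (x ^ 2 - c / w i), ha]
    have hint : ∫ ω, ((X (t + i) ω) ^ 2 - min ((X (t + i) ω) ^ 2) (c / w i)) ∂μ
        ≤ ∫ ω, (X (t + i) ω) ^ 4 * (w i / c) ∂μ :=
      integral_mono ((hX2int (t + i)).sub (hminint i))
        ((hX4int (t + i)).mul_const _) key
    rw [integral_sub (hX2int (t + i)) (hminint i), hvar (t + i),
      integral_mul_const, hκt (t + i)] at hint
    calc (σ (t + i)) ^ 2 - ∫ ω, min ((X (t + i) ω) ^ 2) (c / w i) ∂μ
        ≤ κt (t + i) * (w i / c) := hint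
      _ = κt (t + i) * w i / c := by ring
  -- expectation of the clipped weighted mean
  have hE : (∫ ω, ∑ i ∈ Finset.range (m + 1), w i * min ((X (t + i) ω) ^ 2) (c / w i) ∂μ)
      = ∑ i ∈ Finset.range (m + 1), w i * ∫ ω, min ((X (t + i) ω) ^ 2) (c / w i) ∂μ := by
    rw [integral_finset_sum _ fun i _ => (hminint i).const_mul (w i)]
    exact Finset.sum_congr rfl fun i _ => integral_const_mul _ _
  set E := ∫ ω, ∑ i ∈ Finset.range (m + 1), w i * min ((X (t + i) ω) ^ 2) (c / w i) ∂μ with hEdef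
  have hET : E ≤ T := by
    rw [hE, hTdef]
    exact Finset.sum_le_sum fun i _ =>
      mul_le_mul_of_nonneg_left (hub i) (le_of_lt (hwpos i))
  have hTE : T - E ≤ S / c := by
    rw [hE, hTdef, ← Finset.sum_sub_distrib]
    have : ∀ i ∈ Finset.range (m + 1),
        w i * (σ (t + i)) ^ 2 - w i * ∫ ω, min ((X (t + i) ω) ^ 2) (c / w i) ∂μ
        ≤ (w i) ^ 2 * κt (t + i) / c := by
      intro i _
      have := mul_le_mul_of_nonneg_left (hlb i) (le_of_lt (hwpos i))
      calc w i * (σ (t + i)) ^ 2 - w i * ∫ ω, min ((X (t + i) ω) ^ 2) (c / w i) ∂μ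
          = w i * ((σ (t + i)) ^ 2 - ∫ ω, min ((X (t + i) ω) ^ 2) (c / w i) ∂μ) := by ring
        _ ≤ w i * (κt (t + i) * w i / c) := this
        _ = (w i) ^ 2 * κt (t + i) / c := by ring
    calc (∑ i ∈ Finset.range (m + 1),
          (w i * (σ (t + i)) ^ 2 - w i * ∫ ω, min ((X (t + i) ω) ^ 2) (c / w i) ∂μ))
        ≤ ∑ i ∈ Finset.range (m + 1), (w i) ^ 2 * κt (t + i) / c :=
          Finset.sum_le_sum this
      _ = S / c := by rw [hSdef, Finset.sum_div]
  have hTδ : (σ t) ^ 2 + δ0 = T := by rw [hδ0]; ring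
  refine ⟨hEq, ?_, ?_, ?_⟩
  · rw [abs_le]
    constructor
    · have h1 : S / c ≤ 2 * S / c := by
        have h0 : 0 ≤ S / c := div_nonneg hSnn hc.le
        calc S / c ≤ 2 * (S / c) := by linarith
          _ = 2 * S / c := by ring
      nlinarith [hTE, h1]
    · have : 0 ≤ 2 * S / c := by positivity
      nlinarith [hET]
  · rw [hTδ]; exact hET
  · rw [← hEq, hTδ]
    have h1 : S / c ≤ 2 * S / c := by
      have h0 : 0 ≤ S / c := div_nonneg hSnn hc.le
      calc S / c ≤ 2 * (S / c) := by linarith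
        _ = 2 * S / c := by ring
    linarith [hTE]
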